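/- arXiv:2112.08339 — 4 statements merged into one kernel-verified Lean document; each statement's English description precedes it below -/
import Mathlib

section
/- Let R be an irreducible bi-L-matrix on index set I (row sums and column sums are zero). Let R₀ denote the restriction of R to the subspace of vectors with zero coordinate sum, which is invertible. Then for any distinct i, j ∈ I, the scalar product ⟨(𝟙_i − 𝟙_j), R₀⁻¹(𝟙_i − 𝟙_j)⟩ is strictly positive. -/
section Aux

variable {I : Type*} [Fintype I] [DecidableEq I]

private lemma quad_identity (R : Matrix I I ℝ)
    (hrow : ∀ i, ∑ j, R i j = 0) (hcol : ∀ j, ∑ i, R i j = 0) (v : I → ℝ) :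
    2 * (∑ k, ∑ l, v k * R k l * v l) = -∑ k, ∑ l, R k l * (v k - v l) ^ 2 := by
  have h1 : ∑ k, ∑ l, R k l * v k ^ 2 = 0 :=
    Finset.sum_eq_zero fun k _ => by rw [← Finset.sum_mul, hrow, zero_mul]
  have h2 : ∑ k, ∑ l, R k l * v l ^ 2 = 0 := by
    rw [Finset.sum_comm]
    exact Finset.sum_eq_zero fun l _ => by rw [← Finset.sum_mul, hcol, zero_mul]
  have expand : ∑ k, ∑ l, R k l * (v k - v l) ^ 2
      = (∑ k, ∑ l, R k l * v k ^ 2) + (∑ k, ∑ l, R k l * v l ^ 2)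
        - 2 * (∑ k, ∑ l, v k * R k l * v l) := by
    rw [Finset.mul_sum, ← Finset.sum_add_distrib, ← Finset.sum_sub_distrib]
    refine Finset.sum_congr rfl fun k _ => ?_
    rw [Finset.mul_sum, ← Finset.sum_add_distrib, ← Finset.sum_sub_distrib]
    exact Finset.sum_congr rfl fun l _ => by ring
  rw [expand, h1, h2]; ring

private lemma const_of_graph (R : Matrix I I ℝ)
    (hirr : ∀ i j : I, ∃ (m : ℕ) (p : Fin (m + 1) → I),
      p 0 = i ∧ p (Fin.last m) = j ∧ ∀ k : Fin m, R (p k.castSucc) (p k.succ) < 0)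
    (v : I → ℝ) (h : ∀ k l, R k l < 0 → v k = v l) (a b : I) : v a = v b := by
  obtain ⟨m, p, hp0, hpl, hpe⟩ := hirr a b
  have key : ∀ n (hn : n < m + 1), v (p 0) = v (p ⟨n, hn⟩) := by
    intro n
    induction n with
    | zero => intro hn; rfl
    | succ n ih =>
      intro hn
      have hn' : n < m + 1 := Nat.lt_of_succ_lt hn
      have hnm : n < m := Nat.lt_of_succ_lt_succ hn
      have hstep := h _ _ (hpe ⟨n, hnm⟩)
      rw [ih hn']
      exact hstep
  have := key m (Nat.lt_succ_self m)
  rw [hp0] at this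
  rw [this]
  exact congrArg v hpl

private lemma vanish_of_quad_zero (R : Matrix I I ℝ)
    (hoff : ∀ i j, i ≠ j → R i j ≤ 0)
    (hrow : ∀ i, ∑ j, R i j = 0) (hcol : ∀ j, ∑ i, R i j = 0)
    (hirr : ∀ i j : I, ∃ (m : ℕ) (p : Fin (m + 1) → I),
      p 0 = i ∧ p (Fin.last m) = j ∧ ∀ k : Fin m, R (p k.castSucc) (p k.succ) < 0)
    (v : I → ℝ) (hsum : ∑ k, v k = 0)
    (hq : ∑ k, ∑ l, v k * R k l * v l = 0) : v = 0 := by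
  have hz : ∑ k, ∑ l, R k l * (v k - v l) ^ 2 = 0 := by
    have := quad_identity R hrow hcol v
    rw [hq] at this; linarith
  have hnp : ∀ k l : I, R k l * (v k - v l) ^ 2 ≤ 0 := by
    intro k l
    rcases eq_or_ne k l with rfl | h
    · simp
    · exact mul_nonpos_of_nonpos_of_nonneg (hoff k l h) (sq_nonneg _)
  have h1 := (Finset.sum_eq_zero_iff_of_nonpos
    (fun k _ => Finset.sum_nonpos fun l _ => hnp k l)).mp hz
  have h2 : ∀ k l : I, R k l * (v k - v l) ^ 2 = 0 := fun k l =>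
    (Finset.sum_eq_zero_iff_of_nonpos (fun l _ => hnp k l)).mp
      (h1 k (Finset.mem_univ k)) l (Finset.mem_univ l)
  have hc : ∀ k l, R k l < 0 → v k = v l := by
    intro k l hR
    rcases mul_eq_zero.mp (h2 k l) with h | h
    · exact absurd h hR.ne
    · have := pow_eq_zero_iff (n := 2) (by norm_num) |>.mp h
      linarith [sub_eq_zero.mp this]
  funext a
  have hconst : ∀ k, v k = v a := fun k => const_of_graph R hirr v hc k a
  have hcard : (0 : ℝ) < (Fintype.card I : ℝ) := by
    have : Nonempty I := ⟨a⟩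
    exact_mod_cast Fintype.card_pos
  have : (Fintype.card I : ℝ) * v a = 0 := by
    rw [← hsum]
    rw [Finset.sum_congr rfl fun k _ => hconst k]
    rw [Finset.sum_const, nsmul_eq_mul]
    rfl
  have := (mul_eq_zero.mp this).resolve_left (ne_of_gt hcard)
  simpa using this

end Aux

/-- Let `R` be an irreducible bi-L-matrix on a finite index set `I` (nonnegative
diagonal, nonpositive off-diagonal entries, zero row and column sums, strongly connected
negative-entry graph).  Its restriction `R₀` to the zero-sum hyperplane is invertible, and for any
distinct `i, j`, the scalar product `⟨𝟙_i − 𝟙_j, R₀⁻¹(𝟙_i − 𝟙_j)⟩` is strictly positive.  We state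
this as: there exists a zero-sum vector `v` with `R v = 𝟙_i − 𝟙_j` (unique, by invertibility of
`R₀`), and `⟨𝟙_i − 𝟙_j, v⟩ > 0`. -/
theorem stmt1 (I : Type*) [Fintype I] [DecidableEq I] (R : Matrix I I ℝ)
    (hdiag : ∀ i, 0 ≤ R i i)
    (hoff : ∀ i j, i ≠ j → R i j ≤ 0)
    (hrow : ∀ i, ∑ j, R i j = 0)
    (hcol : ∀ j, ∑ i, R i j = 0)
    (hirr : ∀ i j : I, ∃ (m : ℕ) (p : Fin (m + 1) → I),
      p 0 = i ∧ p (Fin.last m) = j ∧ ∀ k : Fin m, R (p k.castSucc) (p k.succ) < 0)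
    (i j : I) (hij : i ≠ j) :
    ∃ v : I → ℝ, (∑ k, v k = 0) ∧
      R.mulVec v = (fun k => (if k = i then (1 : ℝ) else 0) - (if k = j then 1 else 0)) ∧
      (∀ w : I → ℝ, (∑ k, w k = 0) →
        R.mulVec w = (fun k => (if k = i then (1 : ℝ) else 0) - (if k = j then 1 else 0)) →
        w = v) ∧
      0 < ∑ k, ((if k = i then (1 : ℝ) else 0) - (if k = j then 1 else 0)) * v k := by
  classical
  set u : I → ℝ := fun k => (if k = i then (1 : ℝ) else 0) - (if k = j then 1 else 0) with hu
  have husum : ∑ k, u k = 0 := by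
    have : ∑ k, u k = ∑ k, ((if k = i then (1:ℝ) else 0) - (if k = j then 1 else 0)) := rfl
    rw [this, Finset.sum_sub_distrib]
    simp
  -- sum of R.mulVec is zero (column sums vanish)
  have mulVec_sum : ∀ w : I → ℝ, ∑ k, R.mulVec w k = 0 := by
    intro w
    simp only [Matrix.mulVec, dotProduct]
    rw [Finset.sum_comm]
    exact Finset.sum_eq_zero fun l _ => by rw [← Finset.sum_mul, hcol, zero_mul]
  -- quadratic form
  have quadQ : ∀ w : I → ℝ, ∑ k, R.mulVec w k * w k = ∑ k, ∑ l, w k * R k l * w l := by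
    intro w
    refine Finset.sum_congr rfl fun k _ => ?_
    simp only [Matrix.mulVec, dotProduct, Finset.sum_mul]
    exact Finset.sum_congr rfl fun l _ => by ring
  have kerlemma : ∀ w : I → ℝ, ∑ k, w k = 0 → R.mulVec w = 0 → w = 0 := by
    intro w hs h0
    refine vanish_of_quad_zero R hoff hrow hcol hirr w hs ?_
    rw [← quadQ]
    simp [h0]
  -- auxiliary injective endomorphism
  let T : (I → ℝ) →ₗ[ℝ] (I → ℝ) :=
    { toFun := fun w => R.mulVec w + fun _ => ∑ t, w t
      map_add' := by
        intro x y
        funext k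
        simp only [Pi.add_apply, Matrix.mulVec_add]
        rw [Finset.sum_add_distrib]
        ring
      map_smul' := by
        intro c x
        funext k
        simp only [Pi.add_apply, Pi.smul_apply, Matrix.mulVec_smul, RingHom.id_apply,
          smul_eq_mul]
        rw [← Finset.mul_sum]
        ring }
  have hTsum : ∀ w : I → ℝ, ∑ k, T w k = (Fintype.card I : ℝ) * ∑ t, w t := by
    intro w
    simp only [T, LinearMap.coe_mk, AddHom.coe_mk, Pi.add_apply]
    rw [Finset.sum_add_distrib, mulVec_sum, zero_add, Finset.sum_const, nsmul_eq_mul]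
    rfl
  have hcardpos : (0 : ℝ) < (Fintype.card I : ℝ) := by
    have : Nonempty I := ⟨i⟩
    exact_mod_cast Fintype.card_pos
  have hTinj : Function.Injective T := by
    rw [← LinearMap.ker_eq_bot, LinearMap.ker_eq_bot']
    intro w hw
    have hs : ∑ t, w t = 0 := by
      have := hTsum w
      rw [hw] at this
      simp only [Pi.zero_apply, Finset.sum_const_zero] at this
      exact (mul_eq_zero.mp this.symm).resolve_left (ne_of_gt hcardpos)
    have h0 : R.mulVec w = 0 := by
      have : T w = R.mulVec w + fun _ => ∑ t, w t := rfl
      rw [hw, hs] at this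
      funext k
      have := congrFun this k
      simp at this
      simpa using this.symm
    exact kerlemma w hs h0
  have hTsurj : Function.Surjective T := (LinearMap.injective_iff_surjective).mp hTinj
  obtain ⟨v, hv⟩ := hTsurj u
  have hvsum : ∑ t, v t = 0 := by
    have := hTsum v
    rw [hv, husum] at this
    exact (mul_eq_zero.mp this.symm).resolve_left (ne_of_gt hcardpos)
  have hRv : R.mulVec v = u := by
    have : T v = R.mulVec v + fun _ => ∑ t, v t := rfl
    rw [hv, hvsum] at this
    funext k
    have := congrFun this k
    simp at this
    simpa using this.symm
  have huj : u i = 1 := by simp [hu, hij]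
  -- positivity
  have hpos : 0 < ∑ k, u k * v k := by
    have hQ : ∑ k, u k * v k = ∑ k, ∑ l, v k * R k l * v l := by
      rw [← quadQ]
      exact Finset.sum_congr rfl fun k _ => by rw [hRv]
    have hnn : 0 ≤ ∑ k, ∑ l, v k * R k l * v l := by
      have hid := quad_identity R hrow hcol v
      have hnp : ∀ k l : I, R k l * (v k - v l) ^ 2 ≤ 0 := by
        intro k l
        rcases eq_or_ne k l with rfl | h
        · simp
        · exact mul_nonpos_of_nonpos_of_nonneg (hoff k l h) (sq_nonneg _)
      have : ∑ k, ∑ l, R k l * (v k - v l) ^ 2 ≤ 0 :=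
        Finset.sum_nonpos fun k _ => Finset.sum_nonpos fun l _ => hnp k l
      linarith
    rcases hnn.lt_or_eq with h | h
    · rwa [hQ]
    · exfalso
      have hv0 : v = 0 := vanish_of_quad_zero R hoff hrow hcol hirr v hvsum h.symm
      have : u = 0 := by rw [← hRv, hv0, Matrix.mulVec_zero]
      rw [this] at huj
      simpa using huj
  refine ⟨v, hvsum, hRv, ?_, hpos⟩
  intro w hwsum hwR
  have hdiff : R.mulVec (w - v) = 0 := by
    rw [Matrix.mulVec_sub, hwR, hRv]
    simp
  have hdsum : ∑ k, (w - v) k = 0 := by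
    simp [Finset.sum_sub_distrib, hwsum, hvsum]
  have := kerlemma (w - v) hdsum hdiff
  exact sub_eq_zero.mp this
end

section
/- For every N ≥ 1 there exist a neighbourhood U of 0 in the space of N×N complex matrices and a constant C > 0 such that for all A, B ∈ U, ‖log(e^A e^B) − A − B‖ ≤ C‖[A,B]‖, where [A,B] = AB − BA and log is the matrix logarithm. -/
open scoped BigOperators

/-- The (principal) matrix logarithm, defined near the identity by the power series
`log M = ∑_{k≥0} (−1)^k (M − 1)^{k+1} / (k+1)`. -/
noncomputable def matrixLog {N : ℕ} (M : Matrix (Fin N) (Fin N) ℂ) : Matrix (Fin N) (Fin N) ℂ :=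
  ∑' k : ℕ, ((-1 : ℂ) ^ k / (k + 1)) • (M - 1) ^ (k + 1)

attribute [local instance] Matrix.linftyOpNormedRing Matrix.linftyOpNormedAlgebra

set_option linter.unusedSectionVars false
set_option maxHeartbeats 1000000

open NormedSpace
open scoped Nat

namespace Stmt2Aux

variable {𝔸 : Type*} [NormedRing 𝔸] [NormedAlgebra ℂ 𝔸] [CompleteSpace 𝔸]

/-- The log power series, as a function of `M` (same formula as `matrixLog`). -/
noncomputable def logS (M : 𝔸) : 𝔸 := ∑' k : ℕ, ((-1 : ℂ) ^ k / (k + 1)) • (M - 1) ^ (k + 1)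

lemma norm_coef (k : ℕ) : ‖((-1 : ℂ) ^ k / (k + 1))‖ = ((k : ℝ) + 1)⁻¹ := by
  rw [norm_div, norm_pow, norm_neg, norm_one, one_pow]
  norm_cast
  rw [one_div]

lemma norm_coef_le_one (k : ℕ) : ‖((-1 : ℂ) ^ k / (k + 1))‖ ≤ 1 := by
  rw [norm_coef]
  rw [inv_le_one_iff₀]
  right; linarith [Nat.cast_nonneg (α := ℝ) k]

/-- ‖X^(n+1) - Y^(n+1)‖ ≤ (n+1) r^n ‖X - Y‖ when ‖X‖,‖Y‖ ≤ r. -/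
lemma norm_pow_sub_pow (X Y : 𝔸) {r : ℝ} (hX : ‖X‖ ≤ r) (hY : ‖Y‖ ≤ r) :
    ∀ n : ℕ, ‖X ^ (n + 1) - Y ^ (n + 1)‖ ≤ (n + 1) * r ^ n * ‖X - Y‖ := by
  have hr : 0 ≤ r := le_trans (norm_nonneg X) hX
  intro n
  induction n with
  | zero => simp
  | succ n ih =>
    have key : X ^ (n + 2) - Y ^ (n + 2) = X * (X ^ (n + 1) - Y ^ (n + 1)) + (X - Y) * Y ^ (n + 1) := by
      rw [pow_succ' X (n+1), pow_succ' Y (n+1)]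
      noncomm_ring
    rw [key]
    have h1 : ‖X * (X ^ (n + 1) - Y ^ (n + 1))‖ ≤ r * ((n + 1) * r ^ n * ‖X - Y‖) :=
      le_trans (norm_mul_le _ _) (mul_le_mul hX ih (norm_nonneg _) hr)
    have h2 : ‖(X - Y) * Y ^ (n + 1)‖ ≤ ‖X - Y‖ * r ^ (n + 1) := by
      refine le_trans (norm_mul_le _ _) ?_
      exact mul_le_mul_of_nonneg_left
        (le_trans (norm_pow_le' Y (Nat.succ_pos n)) (pow_le_pow_left₀ (norm_nonneg _) hY _)) (norm_nonneg _)
    calc ‖X * (X ^ (n + 1) - Y ^ (n + 1)) + (X - Y) * Y ^ (n + 1)‖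
        ≤ ‖X * (X ^ (n + 1) - Y ^ (n + 1))‖ + ‖(X - Y) * Y ^ (n + 1)‖ := norm_add_le _ _
      _ ≤ r * ((n + 1) * r ^ n * ‖X - Y‖) + ‖X - Y‖ * r ^ (n + 1) := add_le_add h1 h2
      _ = (↑(n + 1) + 1) * r ^ (n + 1) * ‖X - Y‖ := by push_cast; ring

lemma summable_logS_term (X : 𝔸) (hX : ‖X‖ < 1) :
    Summable (fun k : ℕ => ((-1 : ℂ) ^ k / (k + 1)) • X ^ (k + 1)) := by
  refine Summable.of_norm (Summable.of_nonneg_of_le (fun k => norm_nonneg _) (fun k => ?_)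
    ((summable_geometric_of_lt_one (norm_nonneg X) hX).mul_left ‖X‖))
  rw [norm_smul]
  calc ‖((-1 : ℂ) ^ k / (k + 1))‖ * ‖X ^ (k + 1)‖ ≤ 1 * ‖X‖ ^ (k + 1) :=
        mul_le_mul (norm_coef_le_one k) (norm_pow_le' X (Nat.succ_pos k)) (norm_nonneg _) zero_le_one
    _ = ‖X‖ * ‖X‖ ^ k := by rw [one_mul, pow_succ']

/-- Lipschitz estimate for the log series on the ball of radius 1/2 around 1. -/
lemma logS_lipschitz (M M' : 𝔸) (hM : ‖M - 1‖ ≤ 1/2) (hM' : ‖M' - 1‖ ≤ 1/2) :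
    ‖logS M - logS M'‖ ≤ 2 * ‖M - M'‖ := by
  set X := M - 1 with hXdef
  set Y := M' - 1 with hYdef
  have hXY : X - Y = M - M' := by rw [hXdef, hYdef]; abel
  have hX1 : ‖X‖ < 1 := lt_of_le_of_lt hM (by norm_num)
  have hY1 : ‖Y‖ < 1 := lt_of_le_of_lt hM' (by norm_num)
  have hsX := summable_logS_term X hX1
  have hsY := summable_logS_term Y hY1
  have key : logS M - logS M' = ∑' k : ℕ, ((-1 : ℂ) ^ k / (k + 1)) • (X ^ (k+1) - Y ^ (k+1)) := by
    rw [logS, logS, ← hXdef, ← hYdef, ← Summable.tsum_sub hsX hsY]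
    exact tsum_congr fun k => (smul_sub _ _ _).symm
  rw [key]
  have hbound : ∀ k : ℕ, ‖((-1 : ℂ) ^ k / (k + 1)) • (X ^ (k+1) - Y ^ (k+1))‖ ≤ (1/2) ^ k * ‖M - M'‖ := by
    intro k
    rw [norm_smul, norm_coef]
    calc ((k:ℝ) + 1)⁻¹ * ‖X ^ (k+1) - Y ^ (k+1)‖
        ≤ ((k:ℝ) + 1)⁻¹ * ((k + 1) * (1/2) ^ k * ‖X - Y‖) := by
          refine mul_le_mul_of_nonneg_left (norm_pow_sub_pow X Y hM hM' k) ?_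
          positivity
      _ = (1/2) ^ k * ‖X - Y‖ := by
          field_simp
      _ = (1/2) ^ k * ‖M - M'‖ := by rw [hXY]
  have hsum : Summable (fun k : ℕ => (1/2 : ℝ) ^ k * ‖M - M'‖) :=
    (summable_geometric_of_lt_one (by norm_num) (by norm_num)).mul_right _
  calc ‖∑' k : ℕ, ((-1 : ℂ) ^ k / (k + 1)) • (X ^ (k+1) - Y ^ (k+1))‖
      ≤ ∑' k : ℕ, ‖((-1 : ℂ) ^ k / (k + 1)) • (X ^ (k+1) - Y ^ (k+1))‖ := by
        refine norm_tsum_le_tsum_norm ?_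
        exact Summable.of_nonneg_of_le (fun k => norm_nonneg _) hbound hsum
    _ ≤ ∑' k : ℕ, (1/2 : ℝ) ^ k * ‖M - M'‖ := by
        refine Summable.tsum_le_tsum hbound ?_ hsum
        exact Summable.of_nonneg_of_le (fun k => norm_nonneg _) hbound hsum
    _ = (∑' k : ℕ, (1/2 : ℝ) ^ k) * ‖M - M'‖ := tsum_mul_right
    _ = 2 * ‖M - M'‖ := by rw [tsum_geometric_of_lt_one (by norm_num) (by norm_num)]; norm_num


lemma exp_sub_one_eq (Y : 𝔸) :
    exp Y - 1 = ∑' n : ℕ, (((Nat.factorial (n+1)) : ℂ)⁻¹) • Y ^ (n + 1) := by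
  have hs : Summable (fun n : ℕ => ((n ! : ℂ)⁻¹) • Y ^ n) := expSeries_summable' Y
  rw [exp_eq_tsum ℂ]
  dsimp only
  rw [Summable.tsum_eq_zero_add hs]
  simp [Nat.factorial]

lemma norm_exp_sub_one_le [NormOneClass 𝔸] (Y : 𝔸) (h : ‖Y‖ ≤ 1/2) :
    ‖exp Y - 1‖ ≤ 2 * ‖Y‖ := by
  rw [exp_sub_one_eq]
  have hbound : ∀ n : ℕ, ‖(((Nat.factorial (n+1)) : ℂ)⁻¹) • Y ^ (n + 1)‖ ≤ ‖Y‖ * (1/2) ^ n := by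
    intro n
    rw [norm_smul, norm_inv]
    have h1 : ‖((Nat.factorial (n+1)) : ℂ)‖ = ((Nat.factorial (n+1)) : ℝ) := by
      rw [Complex.norm_natCast]
    have h2 : (1:ℝ) ≤ ((Nat.factorial (n+1)) : ℝ) := by exact_mod_cast Nat.one_le_iff_ne_zero.mpr (Nat.factorial_ne_zero _)
    calc ‖((Nat.factorial (n+1)) : ℂ)‖⁻¹ * ‖Y ^ (n+1)‖ ≤ 1 * ‖Y‖ ^ (n+1) := by
          refine mul_le_mul ?_ (norm_pow_le' Y (Nat.succ_pos n)) (norm_nonneg _) zero_le_one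
          rw [h1]
          exact inv_le_one_of_one_le₀ h2
      _ = ‖Y‖ * ‖Y‖ ^ n := by rw [one_mul, pow_succ']
      _ ≤ ‖Y‖ * (1/2) ^ n := by
          refine mul_le_mul_of_nonneg_left (pow_le_pow_left₀ (norm_nonneg _) h n) (norm_nonneg _)
  have hsum : Summable (fun n : ℕ => ‖Y‖ * (1/2 : ℝ) ^ n) :=
    (summable_geometric_of_lt_one (by norm_num) (by norm_num)).mul_left _
  calc ‖∑' n : ℕ, (((Nat.factorial (n+1)) : ℂ)⁻¹) • Y ^ (n + 1)‖
      ≤ ∑' n : ℕ, ‖(((Nat.factorial (n+1)) : ℂ)⁻¹) • Y ^ (n + 1)‖ :=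
        norm_tsum_le_tsum_norm (Summable.of_nonneg_of_le (fun n => norm_nonneg _) hbound hsum)
    _ ≤ ∑' n : ℕ, ‖Y‖ * (1/2 : ℝ) ^ n :=
        Summable.tsum_le_tsum hbound (Summable.of_nonneg_of_le (fun n => norm_nonneg _) hbound hsum) hsum
    _ = ‖Y‖ * (∑' n : ℕ, (1/2 : ℝ) ^ n) := tsum_mul_left
    _ = ‖Y‖ * 2 := by rw [tsum_geometric_of_lt_one (by norm_num) (by norm_num)]; norm_num
    _ = 2 * ‖Y‖ := mul_comm _ _

lemma norm_exp_le [NormOneClass 𝔸] (Y : 𝔸) (h : ‖Y‖ ≤ 1/2) : ‖exp Y‖ ≤ 2 := by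
  calc ‖exp Y‖ = ‖(exp Y - 1) + 1‖ := by rw [sub_add_cancel]
    _ ≤ ‖exp Y - 1‖ + ‖(1 : 𝔸)‖ := norm_add_le _ _
    _ ≤ 2 * ‖Y‖ + 1 := by rw [norm_one]; linarith [norm_exp_sub_one_le Y h]
    _ ≤ 2 := by linarith

/-- ‖A B^(m+1) - B^(m+1) A‖ ≤ (m+1)‖B‖^m ‖AB - BA‖ -/
lemma norm_comm_pow (A B : 𝔸) :
    ∀ m : ℕ, ‖A * B ^ (m+1) - B ^ (m+1) * A‖ ≤ (m + 1) * ‖B‖ ^ m * ‖A * B - B * A‖ := by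
  intro m
  induction m with
  | zero => simp
  | succ m ih =>
    have key : A * B ^ (m+2) - B ^ (m+2) * A
        = (A * B ^ (m+1) - B ^ (m+1) * A) * B + B ^ (m+1) * (A * B - B * A) := by
      rw [pow_succ B (m+1)]
      noncomm_ring
    rw [key]
    calc ‖(A * B ^ (m+1) - B ^ (m+1) * A) * B + B ^ (m+1) * (A * B - B * A)‖
        ≤ ‖(A * B ^ (m+1) - B ^ (m+1) * A) * B‖ + ‖B ^ (m+1) * (A * B - B * A)‖ := norm_add_le _ _
      _ ≤ ‖A * B ^ (m+1) - B ^ (m+1) * A‖ * ‖B‖ + ‖B‖ ^ (m+1) * ‖A * B - B * A‖ := by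
          refine add_le_add (norm_mul_le _ _) ?_
          exact le_trans (norm_mul_le _ _)
            (mul_le_mul_of_nonneg_right (norm_pow_le' B (Nat.succ_pos m)) (norm_nonneg _))
      _ ≤ ((m + 1) * ‖B‖ ^ m * ‖A * B - B * A‖) * ‖B‖ + ‖B‖ ^ (m+1) * ‖A * B - B * A‖ := by
          refine add_le_add (mul_le_mul_of_nonneg_right ih (norm_nonneg _)) le_rfl
      _ ≤ (↑(m+1) + 1) * ‖B‖ ^ (m+1) * ‖A * B - B * A‖ := by
          rw [pow_succ]
          push_cast
          nlinarith [norm_nonneg (A * B - B * A), norm_nonneg B, pow_nonneg (norm_nonneg B) m]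

/-- Commutator with an exponential. -/
lemma norm_comm_exp (A B : 𝔸) (hB : ‖B‖ ≤ 1) :
    ‖A * exp B - exp B * A‖ ≤ Real.exp 2 * ‖A * B - B * A‖ := by
  have hs : Summable (fun n : ℕ => ((n ! : ℂ)⁻¹) • B ^ n) := expSeries_summable' B
  have hsl : Summable (fun n : ℕ => ((n ! : ℂ)⁻¹) • (A * B ^ n)) := by
    have := hs.mul_left A
    simpa [mul_smul_comm] using this
  have hsr : Summable (fun n : ℕ => ((n ! : ℂ)⁻¹) • (B ^ n * A)) := by
    have := hs.mul_right A
    simpa [smul_mul_assoc] using this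
  have e1 : A * exp B = ∑' n : ℕ, ((n ! : ℂ)⁻¹) • (A * B ^ n) := by
    rw [exp_eq_tsum ℂ]
    dsimp only
    rw [← hs.tsum_mul_left A]
    exact tsum_congr fun n => (mul_smul_comm _ _ _)
  have e2 : exp B * A = ∑' n : ℕ, ((n ! : ℂ)⁻¹) • (B ^ n * A) := by
    rw [exp_eq_tsum ℂ]
    dsimp only
    rw [← hs.tsum_mul_right A]
    exact tsum_congr fun n => (smul_mul_assoc _ _ _)
  have key : A * exp B - exp B * A
      = ∑' n : ℕ, ((n ! : ℂ)⁻¹) • (A * B ^ n - B ^ n * A) := by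
    rw [e1, e2, ← Summable.tsum_sub hsl hsr]
    exact tsum_congr fun n => (smul_sub _ _ _).symm
  rw [key]
  have hbound : ∀ n : ℕ, ‖((n ! : ℂ)⁻¹) • (A * B ^ n - B ^ n * A)‖
      ≤ (2 ^ n / n !) * ‖A * B - B * A‖ := by
    intro n
    match n with
    | 0 => simp
    | (m+1) =>
      rw [norm_smul, norm_inv, Complex.norm_natCast]
      have h2 : (0:ℝ) < ((m+1)! : ℝ) := by exact_mod_cast Nat.factorial_pos _
      have h3 : ‖A * B ^ (m+1) - B ^ (m+1) * A‖ ≤ (m + 1) * ‖A * B - B * A‖ := by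
        refine le_trans (norm_comm_pow A B m) ?_
        have hb1 : ‖B‖ ^ m ≤ 1 := pow_le_one₀ (norm_nonneg _) hB
        have hm0 : (0:ℝ) ≤ (m:ℝ) + 1 := by positivity
        calc ((m:ℝ) + 1) * ‖B‖ ^ m * ‖A * B - B * A‖
            ≤ ((m:ℝ) + 1) * 1 * ‖A * B - B * A‖ :=
              mul_le_mul_of_nonneg_right (mul_le_mul_of_nonneg_left hb1 hm0) (norm_nonneg _)
          _ = ((m:ℝ) + 1) * ‖A * B - B * A‖ := by ring
      have h4 : ((m:ℝ) + 1) ≤ 2 ^ (m+1) := by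
        calc ((m:ℝ) + 1) = ((m + 1 : ℕ) : ℝ) := by push_cast; ring
          _ ≤ ((2 ^ (m+1) : ℕ) : ℝ) := by
              exact_mod_cast le_of_lt (Nat.lt_two_pow_self (n := m+1))
          _ = 2 ^ (m+1) := by push_cast; ring
      calc (((m+1)! : ℝ))⁻¹ * ‖A * B ^ (m+1) - B ^ (m+1) * A‖
          ≤ (((m+1)! : ℝ))⁻¹ * ((m + 1) * ‖A * B - B * A‖) := by
            refine mul_le_mul_of_nonneg_left h3 (by positivity)
        _ = (((m:ℝ) + 1) / (Nat.factorial (m+1))) * ‖A * B - B * A‖ := by ring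
        _ ≤ ((2:ℝ) ^ (m+1) / (Nat.factorial (m+1))) * ‖A * B - B * A‖ := by
            gcongr
  have hsum : Summable (fun n : ℕ => ((2:ℝ) ^ n / n !) * ‖A * B - B * A‖) :=
    (Real.summable_pow_div_factorial 2).mul_right _
  calc ‖∑' n : ℕ, ((n ! : ℂ)⁻¹) • (A * B ^ n - B ^ n * A)‖
      ≤ ∑' n : ℕ, ‖((n ! : ℂ)⁻¹) • (A * B ^ n - B ^ n * A)‖ :=
        norm_tsum_le_tsum_norm (Summable.of_nonneg_of_le (fun n => norm_nonneg _) hbound hsum)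
    _ ≤ ∑' n : ℕ, ((2:ℝ) ^ n / n !) * ‖A * B - B * A‖ :=
        Summable.tsum_le_tsum hbound (Summable.of_nonneg_of_le (fun n => norm_nonneg _) hbound hsum) hsum
    _ = (∑' n : ℕ, (2:ℝ) ^ n / n !) * ‖A * B - B * A‖ := tsum_mul_right
    _ = Real.exp 2 * ‖A * B - B * A‖ := by
        congr 1
        rw [Real.exp_eq_exp_ℝ, exp_eq_tsum_div]


section Deriv

variable {N : ℕ} [Nonempty (Fin N)]

local notation "𝕄" => Matrix (Fin N) (Fin N) ℂ

/-- Derivative of a power of a function whose value commutes with its derivative. -/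
lemma hasDerivAt_pow_comm {u : ℝ → 𝕄} {w : 𝕄} {t : ℝ} (hu : HasDerivAt u w t)
    (hc : Commute (u t) w) (n : ℕ) :
    HasDerivAt (fun s => u s ^ (n + 1)) ((n + 1 : ℕ) • (u t ^ n * w)) t := by
  induction n with
  | zero => simpa using hu
  | succ n ih =>
    have h : HasDerivAt (fun s => u s * u s ^ (n + 1))
        (w * u t ^ (n + 1) + u t * ((n + 1 : ℕ) • (u t ^ n * w))) t := hu.mul ih
    have e : (fun s => u s * u s ^ (n + 1)) = fun s => u s ^ (n + 2) := by
      funext s; rw [← pow_succ']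
    rw [e] at h
    convert h using 1
    have h1 : w * u t ^ (n + 1) = u t ^ (n + 1) * w := (hc.symm.pow_right (n + 1)).eq
    have h2 : u t * ((n + 1 : ℕ) • (u t ^ n * w)) = (n + 1 : ℕ) • (u t ^ (n + 1) * w) := by
      rw [mul_smul_comm, ← mul_assoc, ← pow_succ']
    rw [h1, h2, ← succ_nsmul' (u t ^ (n + 1) * w) (n + 1)]

/-- The key identity: `logS (exp X) = X` for small `X`. -/
lemma logS_exp (X : 𝕄) (hX : ‖X‖ ≤ 1/6) : logS (exp X) = X := by
  classical
  set g : ℕ → ℝ → 𝕄 := fun k t => ((-1 : ℂ) ^ k / (k + 1)) • (exp (t • X) - 1) ^ (k + 1) with hgdef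
  set g' : ℕ → ℝ → 𝕄 := fun k t =>
    ((-1 : ℂ) ^ k / (k + 1)) •
      ((k + 1 : ℕ) • ((exp (t • X) - 1) ^ k * (exp (t • X) * X))) with hg'def
  -- derivative of the exponential path
  have hE : ∀ t : ℝ, HasDerivAt (fun s : ℝ => exp (s • X)) (exp (t • X) * X) t := by
    intro t
    have h := hasDerivAt_exp_smul_const (𝕂 := ℝ) X t
    exact h
  have hXE : ∀ t : ℝ, Commute X (exp (t • X)) := fun t =>
    ((Commute.refl X).smul_right t).exp_right
  have hcomm : ∀ t : ℝ, Commute (exp (t • X) - 1) (exp (t • X) * X) := by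
    intro t
    have c1 : Commute (exp (t • X) - 1) (exp (t • X)) :=
      (Commute.refl _).sub_left (Commute.one_left _)
    have c2 : Commute (exp (t • X) - 1) X :=
      ((hXE t).symm).sub_left (Commute.one_left _)
    exact c1.mul_right c2
  have hderiv : ∀ (k : ℕ) (t : ℝ), HasDerivAt (g k) (g' k t) t := by
    intro k t
    exact HasDerivAt.const_smul ((-1 : ℂ) ^ k / (k + 1)) (hasDerivAt_pow_comm ((hE t).sub_const 1) (by
      simpa using hcomm t) k)
  -- bounds on the set Ioo (-2) 2
  have hbound : ∀ (k : ℕ) (t : ℝ), t ∈ Set.Ioo (-2 : ℝ) 2 → ‖g' k t‖ ≤ (2/3 : ℝ) ^ k := by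
    intro k t ht
    have htX : ‖t • X‖ ≤ 1/3 := by
      rw [norm_smul, Real.norm_eq_abs]
      have h2 : |t| ≤ 2 := by
        rw [abs_le]; exact ⟨le_of_lt ht.1, le_of_lt ht.2⟩
      calc |t| * ‖X‖ ≤ 2 * (1/6) := by
            exact mul_le_mul h2 hX (norm_nonneg _) (by norm_num)
        _ = 1/3 := by norm_num
    have hu1 : ‖exp (t • X) - 1‖ ≤ 2/3 := by
      calc ‖exp (t • X) - 1‖ ≤ 2 * ‖t • X‖ := norm_exp_sub_one_le _ (by linarith)
        _ ≤ 2/3 := by linarith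
    have hE2 : ‖exp (t • X)‖ ≤ 2 := norm_exp_le _ (by linarith)
    have hp : ‖(exp (t • X) - 1) ^ k * (exp (t • X) * X)‖ ≤ (2/3) ^ k * (1/3) := by
      calc ‖(exp (t • X) - 1) ^ k * (exp (t • X) * X)‖
          ≤ ‖(exp (t • X) - 1) ^ k‖ * ‖exp (t • X) * X‖ := norm_mul_le _ _
        _ ≤ (2/3) ^ k * (1/3) := by
            refine mul_le_mul ?_ ?_ (norm_nonneg _) (by positivity)
            · exact le_trans (norm_pow_le _ k) (pow_le_pow_left₀ (norm_nonneg _) hu1 k)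
            · calc ‖exp (t • X) * X‖ ≤ ‖exp (t • X)‖ * ‖X‖ := norm_mul_le _ _
                _ ≤ 2 * (1/6) := mul_le_mul hE2 hX (norm_nonneg _) (by norm_num)
                _ = 1/3 := by norm_num
    have : ‖g' k t‖ = ((k : ℝ) + 1)⁻¹ * (((k : ℝ) + 1) *
        ‖(exp (t • X) - 1) ^ k * (exp (t • X) * X)‖) := by
      rw [hg'def]
      rw [norm_smul, norm_coef, ← Nat.cast_smul_eq_nsmul ℝ, norm_smul, Real.norm_eq_abs]
      push_cast
      rw [abs_of_nonneg (by positivity)]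
    rw [this]
    have hk : ((k : ℝ) + 1)⁻¹ * ((k : ℝ) + 1) = 1 := by
      field_simp
    calc ((k : ℝ) + 1)⁻¹ * (((k : ℝ) + 1) * ‖(exp (t • X) - 1) ^ k * (exp (t • X) * X)‖)
        = ‖(exp (t • X) - 1) ^ k * (exp (t • X) * X)‖ := by
          rw [← mul_assoc, hk, one_mul]
      _ ≤ (2/3) ^ k * (1/3) := hp
      _ ≤ (2/3) ^ k := by
          nlinarith [pow_nonneg (show (0:ℝ) ≤ 2/3 by norm_num) k]
  have hg0 : ∀ k : ℕ, g k 0 = 0 := by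
    intro k
    rw [hgdef]
    simp
  -- the series of derivatives sums to X
  have hsumderiv : ∀ t : ℝ, t ∈ Set.Ioo (-2 : ℝ) 2 → (∑' k : ℕ, g' k t) = X := by
    intro t ht
    set E := exp (t • X) with hEdef
    have htX : ‖t • X‖ ≤ 1/3 := by
      rw [norm_smul, Real.norm_eq_abs]
      have h2 : |t| ≤ 2 := by
        rw [abs_le]; exact ⟨le_of_lt ht.1, le_of_lt ht.2⟩
      calc |t| * ‖X‖ ≤ 2 * (1/6) := mul_le_mul h2 hX (norm_nonneg _) (by norm_num)
        _ = 1/3 := by norm_num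
    have hu1 : ‖E - 1‖ ≤ 2/3 := by
      calc ‖E - 1‖ ≤ 2 * ‖t • X‖ := norm_exp_sub_one_le _ (by linarith)
        _ ≤ 2/3 := by linarith
    have hne : ‖-(E - 1)‖ < 1 := by
      rw [norm_neg]; linarith
    have hterm : ∀ k : ℕ, g' k t = (-(E - 1)) ^ k * (E * X) := by
      intro k
      show ((-1 : ℂ) ^ k / (k + 1)) • ((k + 1 : ℕ) • ((E - 1) ^ k * (E * X)))
          = (-(E - 1)) ^ k * (E * X)
      have h1 : ((k + 1 : ℕ) • ((E - 1) ^ k * (E * X)))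
          = ((k : ℂ) + 1) • ((E - 1) ^ k * (E * X)) := by
        rw [← Nat.cast_smul_eq_nsmul ℂ]
        push_cast
        ring_nf
      rw [h1, smul_smul]
      have h2 : ((-1 : ℂ) ^ k / (k + 1)) * ((k : ℂ) + 1) = (-1 : ℂ) ^ k := by
        have : ((k : ℂ) + 1) ≠ 0 := by
          exact Nat.cast_add_one_ne_zero k
        field_simp
      rw [h2]
      rw [← smul_mul_assoc, ← smul_pow, neg_smul, one_smul]
    rw [tsum_congr hterm]
    have hsumgeo : Summable (fun k : ℕ => (-(E - 1)) ^ k) :=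
      summable_geometric_of_norm_lt_one hne
    rw [hsumgeo.tsum_mul_right]
    have hgeo : (∑' k : ℕ, (-(E - 1)) ^ k) * (1 - -(E - 1)) = 1 :=
      geom_series_mul_neg _ hne
    have hE1 : (1 : 𝕄) - -(E - 1) = E := by rw [sub_neg_eq_add, add_sub_cancel]
    rw [hE1] at hgeo
    rw [← mul_assoc, hgeo, one_mul]
  -- apply the derivative-of-series theorem
  have hψ : ∀ t : ℝ, t ∈ Set.Ioo (-2 : ℝ) 2 →
      HasDerivAt (fun z => ∑' k : ℕ, g k z) X t := by
    intro t ht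
    have h := hasDerivAt_tsum_of_isPreconnected
      (summable_geometric_of_lt_one (by norm_num) (by norm_num : (2/3 : ℝ) < 1))
      isOpen_Ioo (isPreconnected_Ioo)
      (fun k y _ => hderiv k y) hbound
      (show (0:ℝ) ∈ Set.Ioo (-2:ℝ) 2 by constructor <;> norm_num)
      (by simpa [hg0] using summable_zero) ht
    exact h.congr_deriv (hsumderiv t ht)
  -- conclude via uniqueness of functions with equal derivatives
  have key : ∀ s ∈ Set.Icc (0:ℝ) 1, (fun z => ∑' k : ℕ, g k z) s = (fun z : ℝ => z • X) s := by
    have hsub : ∀ s : ℝ, s ∈ Set.Icc (0:ℝ) 1 → s ∈ Set.Ioo (-2:ℝ) 2 := by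
      intro s hs
      constructor <;> [linarith [hs.1]; linarith [hs.2]]
    refine eq_of_has_deriv_right_eq (f' := fun _ => X) ?_ ?_ ?_ ?_ ?_
    · intro s hs
      exact (hψ s (hsub s ⟨hs.1, le_of_lt hs.2⟩)).hasDerivWithinAt
    · intro s hs
      have : HasDerivAt (fun z : ℝ => z • X) X s := by
        have h := (hasDerivAt_id s).smul_const X; simp only [id, one_smul] at h; exact h
      exact this.hasDerivWithinAt
    · intro s hs
      exact ((hψ s (hsub s hs)).continuousAt).continuousWithinAt
    · exact (Continuous.continuousOn (by continuity))
    · show (∑' k : ℕ, g k 0) = (0:ℝ) • X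
      simp [hg0]
  have h1 := key 1 ⟨zero_le_one, le_refl 1⟩
  simp only [one_smul] at h1
  rw [logS]
  refine (tsum_congr fun k => ?_).trans h1
  rw [hgdef]
  simp only [one_smul]


end Deriv

section MatrixSide

variable {N : ℕ} [Nonempty (Fin N)]

local notation "𝕄" => Matrix (Fin N) (Fin N) ℂ

lemma hasDerivAt_exp_path (Y : 𝕄) (t : ℝ) :
    HasDerivAt (fun s : ℝ => exp (s • Y)) (exp (t • Y) * Y) t := by
  have h := hasDerivAt_exp_smul_const (𝕂 := ℝ) Y t
  exact h

lemma exp_mul_exp_sub_exp_add (A B : 𝕄) (hA : ‖A‖ ≤ 1/6) (hB : ‖B‖ ≤ 1/6) :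
    ‖exp A * exp B - exp (A + B)‖ ≤ (4 * Real.exp 2) * ‖A * B - B * A‖ := by
  set F : ℝ → 𝕄 :=
    fun t => exp (t • A) * exp (t • B) * exp ((1 - t) • (A + B)) with hF
  have hR : ∀ t : ℝ, HasDerivAt (fun s : ℝ => exp ((1 - s) • (A + B)))
      (-(exp ((1 - t) • (A + B)) * (A + B))) t := by
    intro t
    have h1 : HasDerivAt (fun s : ℝ => 1 - s) (-1) t := by
      simpa using (hasDerivAt_id t).const_sub 1
    have h2 := hasDerivAt_exp_path (A + B) (1 - t)
    have h3 := HasDerivAt.scomp t h2 h1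
    simp [neg_smul, one_smul] at h3 ⊢; exact h3
  have hFd : ∀ t : ℝ, HasDerivAt F
      (exp (t • A) * (A * exp (t • B) - exp (t • B) * A) * exp ((1 - t) • (A + B))) t := by
    intro t
    have h := ((hasDerivAt_exp_path A t).mul (hasDerivAt_exp_path B t)).mul (hR t)
    refine h.congr_deriv ?_
    have hCR : exp ((1 - t) • (A + B)) * (A + B)
        = (A + B) * exp ((1 - t) • (A + B)) :=
      ((((Commute.refl (A + B)).smul_right (1 - t)).exp_right).eq).symm
    rw [hCR]
    simp only [Pi.mul_apply]
    noncomm_ring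
  have hbound : ∀ t ∈ Set.Ico (0:ℝ) 1,
      ‖exp (t • A) * (A * exp (t • B) - exp (t • B) * A) * exp ((1 - t) • (A + B))‖
        ≤ (4 * Real.exp 2) * ‖A * B - B * A‖ := by
    intro t ht
    have ht0 : (0:ℝ) ≤ t := ht.1
    have ht1 : t ≤ 1 := le_of_lt ht.2
    have htabs : |t| ≤ 1 := by rw [abs_of_nonneg ht0]; exact ht1
    have h1tabs : |1 - t| ≤ 1 := by rw [abs_of_nonneg (by linarith)]; linarith
    have htA : ‖t • A‖ ≤ 1/6 := by
      rw [norm_smul, Real.norm_eq_abs]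
      calc |t| * ‖A‖ ≤ 1 * (1/6) := mul_le_mul htabs hA (norm_nonneg _) zero_le_one
        _ = 1/6 := by norm_num
    have htB : ‖t • B‖ ≤ 1/6 := by
      rw [norm_smul, Real.norm_eq_abs]
      calc |t| * ‖B‖ ≤ 1 * (1/6) := mul_le_mul htabs hB (norm_nonneg _) zero_le_one
        _ = 1/6 := by norm_num
    have htC : ‖(1 - t) • (A + B)‖ ≤ 1/3 := by
      rw [norm_smul, Real.norm_eq_abs]
      have : ‖A + B‖ ≤ 1/3 := le_trans (norm_add_le _ _) (by linarith)
      calc |1 - t| * ‖A + B‖ ≤ 1 * (1/3) := mul_le_mul h1tabs this (norm_nonneg _) zero_le_one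
        _ = 1/3 := by norm_num
    have hP : ‖exp (t • A)‖ ≤ 2 := norm_exp_le _ (by linarith)
    have hRn : ‖exp ((1 - t) • (A + B))‖ ≤ 2 := norm_exp_le _ (by linarith)
    have hmid : ‖A * exp (t • B) - exp (t • B) * A‖ ≤ Real.exp 2 * ‖A * B - B * A‖ := by
      have h := norm_comm_exp A (t • B) (by linarith)
      have he : A * (t • B) - (t • B) * A = t • (A * B - B * A) := by
        rw [mul_smul_comm, smul_mul_assoc, smul_sub]
      rw [he, norm_smul, Real.norm_eq_abs] at h
      calc ‖A * exp (t • B) - exp (t • B) * A‖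
          ≤ Real.exp 2 * (|t| * ‖A * B - B * A‖) := h
        _ ≤ Real.exp 2 * (1 * ‖A * B - B * A‖) := by
            refine mul_le_mul_of_nonneg_left ?_ (le_of_lt (Real.exp_pos 2))
            exact mul_le_mul_of_nonneg_right htabs (norm_nonneg _)
        _ = Real.exp 2 * ‖A * B - B * A‖ := by ring
    calc ‖exp (t • A) * (A * exp (t • B) - exp (t • B) * A) * exp ((1 - t) • (A + B))‖
        ≤ ‖exp (t • A) * (A * exp (t • B) - exp (t • B) * A)‖
            * ‖exp ((1 - t) • (A + B))‖ := norm_mul_le _ _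
      _ ≤ ‖exp (t • A)‖ * ‖A * exp (t • B) - exp (t • B) * A‖
            * ‖exp ((1 - t) • (A + B))‖ := by
          exact mul_le_mul_of_nonneg_right (norm_mul_le _ _) (norm_nonneg _)
      _ ≤ 2 * (Real.exp 2 * ‖A * B - B * A‖) * 2 := by
          have h0 : (0:ℝ) ≤ ‖A * exp (t • B) - exp (t • B) * A‖ := norm_nonneg _
          have h1 : ‖exp (t • A)‖ * ‖A * exp (t • B) - exp (t • B) * A‖
              ≤ 2 * (Real.exp 2 * ‖A * B - B * A‖) :=
            mul_le_mul hP hmid h0 (by norm_num)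
          exact mul_le_mul h1 hRn (norm_nonneg _) (by positivity)
      _ = (4 * Real.exp 2) * ‖A * B - B * A‖ := by ring
  have hmvt := norm_image_sub_le_of_norm_deriv_le_segment'
    (f := F) (a := 0) (b := 1)
    (f' := fun t => exp (t • A) * (A * exp (t • B) - exp (t • B) * A)
      * exp ((1 - t) • (A + B)))
    (C := (4 * Real.exp 2) * ‖A * B - B * A‖)
    (fun t _ => (hFd t).hasDerivWithinAt) hbound 1 (Set.right_mem_Icc.2 zero_le_one)
  have hF1 : F 1 = exp A * exp B := by
    rw [hF]
    norm_num
  have hF0 : F 0 = exp (A + B) := by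
    rw [hF]
    norm_num
  rw [hF1, hF0] at hmvt
  simpa using hmvt


end MatrixSide

end Stmt2Aux

/-- For every `N ≥ 1` there is a neighbourhood `U` of `0` in `M_N(ℂ)` and a
constant `C > 0` such that for all `A, B ∈ U`,
`‖log(e^A e^B) − A − B‖ ≤ C ‖[A,B]‖` where `[A,B] = AB − BA`. -/
theorem stmt2 (N : ℕ) (hN : 1 ≤ N) :
    ∃ U ∈ nhds (0 : Matrix (Fin N) (Fin N) ℂ), ∃ C : ℝ, 0 < C ∧
      ∀ A ∈ U, ∀ B ∈ U,
        ‖matrixLog (NormedSpace.exp A * NormedSpace.exp B) - A - B‖ ≤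
          C * ‖A * B - B * A‖ := by
  haveI : Nonempty (Fin N) := Fin.pos_iff_nonempty.mp hN
  refine ⟨Metric.ball 0 (1/12), Metric.ball_mem_nhds _ (by norm_num),
    8 * Real.exp 2, by positivity, ?_⟩
  intro A hA B hB
  rw [Metric.mem_ball, dist_zero_right] at hA hB
  have hA12 : ‖A‖ ≤ 1/12 := le_of_lt hA
  have hB12 : ‖B‖ ≤ 1/12 := le_of_lt hB
  have hA6 : ‖A‖ ≤ 1/6 := by linarith
  have hB6 : ‖B‖ ≤ 1/6 := by linarith
  have hAB : ‖A + B‖ ≤ 1/6 := le_trans (norm_add_le _ _) (by linarith)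
  have hlogM : Stmt2Aux.logS (NormedSpace.exp (A + B)) = A + B :=
    Stmt2Aux.logS_exp (A + B) hAB
  have heqlog : matrixLog (NormedSpace.exp A * NormedSpace.exp B)
      = Stmt2Aux.logS (NormedSpace.exp A * NormedSpace.exp B) := rfl
  have haexp : ‖NormedSpace.exp A - 1‖ ≤ 1/6 := by
    have := Stmt2Aux.norm_exp_sub_one_le A (by linarith)
    exact le_trans this (le_trans (mul_le_mul_of_nonneg_left hA12 (by norm_num)) (by norm_num))
  have hbexp : ‖NormedSpace.exp B - 1‖ ≤ 1/6 := by
    have := Stmt2Aux.norm_exp_sub_one_le B (by linarith)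
    exact le_trans this (le_trans (mul_le_mul_of_nonneg_left hB12 (by norm_num)) (by norm_num))
  have hE1 : ‖NormedSpace.exp A * NormedSpace.exp B - 1‖ ≤ 1/2 := by
    have key : NormedSpace.exp A * NormedSpace.exp B - 1
        = (NormedSpace.exp A - 1) * (NormedSpace.exp B - 1)
          + (NormedSpace.exp A - 1) + (NormedSpace.exp B - 1) := by
      noncomm_ring
    rw [key]
    have h1 : ‖(NormedSpace.exp A - 1) * (NormedSpace.exp B - 1)‖ ≤ (1/6) * (1/6) :=
      le_trans (norm_mul_le _ _) (mul_le_mul haexp hbexp (norm_nonneg _) (by norm_num))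
    calc ‖(NormedSpace.exp A - 1) * (NormedSpace.exp B - 1)
          + (NormedSpace.exp A - 1) + (NormedSpace.exp B - 1)‖
        ≤ ‖(NormedSpace.exp A - 1) * (NormedSpace.exp B - 1)
          + (NormedSpace.exp A - 1)‖ + ‖NormedSpace.exp B - 1‖ := norm_add_le _ _
      _ ≤ ‖(NormedSpace.exp A - 1) * (NormedSpace.exp B - 1)‖
          + ‖NormedSpace.exp A - 1‖ + ‖NormedSpace.exp B - 1‖ := by
          have := norm_add_le ((NormedSpace.exp A - 1) * (NormedSpace.exp B - 1))
            (NormedSpace.exp A - 1)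
          linarith
      _ ≤ (1/6) * (1/6) + 1/6 + 1/6 := by linarith
      _ ≤ 1/2 := by norm_num
  have hM1 : ‖NormedSpace.exp (A + B) - 1‖ ≤ 1/2 := by
    have := Stmt2Aux.norm_exp_sub_one_le (A + B) (by linarith)
    exact le_trans this (le_trans (mul_le_mul_of_nonneg_left hAB (by norm_num)) (by norm_num))
  have hlip := Stmt2Aux.logS_lipschitz
    (NormedSpace.exp A * NormedSpace.exp B) (NormedSpace.exp (A + B)) hE1 hM1
  have hEM := Stmt2Aux.exp_mul_exp_sub_exp_add A B hA6 hB6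
  calc ‖matrixLog (NormedSpace.exp A * NormedSpace.exp B) - A - B‖
      = ‖Stmt2Aux.logS (NormedSpace.exp A * NormedSpace.exp B)
          - Stmt2Aux.logS (NormedSpace.exp (A + B))‖ := by
        rw [heqlog, hlogM, sub_sub]
    _ ≤ 2 * ‖NormedSpace.exp A * NormedSpace.exp B - NormedSpace.exp (A + B)‖ := hlip
    _ ≤ 2 * ((4 * Real.exp 2) * ‖A * B - B * A‖) := by
        have h2 : (0:ℝ) ≤ 2 := by norm_num
        exact mul_le_mul_of_nonneg_left hEM h2
    _ = 8 * Real.exp 2 * ‖A * B - B * A‖ := by ring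
end

section
/- Let N ≥ 1, R ∈ M_N(ℂ), and let ω : (0,∞) → [0,∞) satisfy ω(ε) = o(ε) as ε → 0. Let (R_{ε,n})_{ε>0, n≥0} be matrices with sup_n ‖R_{ε,n}‖ ≤ ω(ε). Define M_ε(t) := ∏_{n=0}^{⌊ε⁻¹t⌋−1} (Id − εR + R_{ε,n}) (in any fixed order of multiplication). Then M_ε converges to the function t ↦ e^{−tR} uniformly on compact subsets of [0,∞) as ε → 0. -/
open Filter
open scoped Topology Nat

section Helpers

variable {𝔸 : Type*} [NormedRing 𝔸] [NormedAlgebra ℂ 𝔸] [CompleteSpace 𝔸] [NormOneClass 𝔸]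

lemma aux_norm_pow_le (x : 𝔸) (n : ℕ) : ‖x ^ n‖ ≤ ‖x‖ ^ n := by
  cases n with
  | zero => simp
  | succ n => exact norm_pow_le' x n.succ_pos

lemma aux_term_le (x : 𝔸) (k n : ℕ) (hk : n ! ≤ (n + k)!) :
    ‖(((n + k)! : ℂ))⁻¹ • x ^ (n + k)‖ ≤ ‖x‖ ^ k * (‖x‖ ^ n / n !) := by
  rw [norm_smul, norm_inv, Complex.norm_natCast]
  have h1 : ‖x ^ (n + k)‖ ≤ ‖x‖ ^ k * ‖x‖ ^ n := by
    calc ‖x ^ (n + k)‖ ≤ ‖x‖ ^ (n + k) := aux_norm_pow_le x _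
    _ = ‖x‖ ^ k * ‖x‖ ^ n := by rw [← pow_add]; ring_nf
  have h2 : ((n + k)! : ℝ)⁻¹ ≤ ((n !) : ℝ)⁻¹ := by
    apply inv_anti₀
    · exact_mod_cast Nat.factorial_pos n
    · exact_mod_cast hk
  calc ((n + k)! : ℝ)⁻¹ * ‖x ^ (n + k)‖ ≤ ((n !) : ℝ)⁻¹ * (‖x‖ ^ k * ‖x‖ ^ n) := by
        apply mul_le_mul h2 h1 (norm_nonneg _)
        positivity
  _ = ‖x‖ ^ k * (‖x‖ ^ n / n !) := by ring

lemma aux_real_exp_tsum (s : ℝ) : ∑' n : ℕ, s ^ n / n ! = Real.exp s := by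
  rw [Real.exp_eq_exp_ℝ, NormedSpace.exp_eq_tsum_div]

lemma aux_norm_exp_le (x : 𝔸) : ‖NormedSpace.exp x‖ ≤ Real.exp ‖x‖ := by
  rw [NormedSpace.exp_eq_tsum ℂ]
  have hmaj : Summable (fun n : ℕ => ‖x‖ ^ n / n !) := Real.summable_pow_div_factorial ‖x‖
  have hle : ∀ n : ℕ, ‖((n ! : ℂ))⁻¹ • x ^ n‖ ≤ ‖x‖ ^ n / n ! := by
    intro n
    have := aux_term_le x 0 n (by simp)
    simpa using this
  have hnorm : Summable (fun n : ℕ => ‖((n ! : ℂ))⁻¹ • x ^ n‖) :=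
    Summable.of_nonneg_of_le (fun n => norm_nonneg _) hle hmaj
  calc ‖∑' n : ℕ, ((n ! : ℂ))⁻¹ • x ^ n‖ ≤ ∑' n : ℕ, ‖((n ! : ℂ))⁻¹ • x ^ n‖ :=
        norm_tsum_le_tsum_norm hnorm
  _ ≤ ∑' n : ℕ, ‖x‖ ^ n / n ! := Summable.tsum_le_tsum hle hnorm hmaj
  _ = Real.exp ‖x‖ := aux_real_exp_tsum ‖x‖

lemma aux_tail_bound (x : 𝔸) (k : ℕ) :
    ‖∑' n : ℕ, (((n + k)! : ℂ))⁻¹ • x ^ (n + k)‖ ≤ ‖x‖ ^ k * Real.exp ‖x‖ := by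
  have hfac : ∀ n : ℕ, n ! ≤ (n + k)! := fun n => Nat.factorial_le (Nat.le_add_right n k)
  have hmaj : Summable (fun n : ℕ => ‖x‖ ^ k * (‖x‖ ^ n / n !)) :=
    (Real.summable_pow_div_factorial ‖x‖).mul_left _
  have hle := fun n => aux_term_le x k n (hfac n)
  have hnorm : Summable (fun n : ℕ => ‖(((n + k)! : ℂ))⁻¹ • x ^ (n + k)‖) :=
    Summable.of_nonneg_of_le (fun n => norm_nonneg _) hle hmaj
  calc ‖∑' n : ℕ, (((n + k)! : ℂ))⁻¹ • x ^ (n + k)‖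
      ≤ ∑' n : ℕ, ‖(((n + k)! : ℂ))⁻¹ • x ^ (n + k)‖ := norm_tsum_le_tsum_norm hnorm
  _ ≤ ∑' n : ℕ, ‖x‖ ^ k * (‖x‖ ^ n / n !) := Summable.tsum_le_tsum hle hnorm hmaj
  _ = ‖x‖ ^ k * ∑' n : ℕ, ‖x‖ ^ n / n ! := tsum_mul_left
  _ = ‖x‖ ^ k * Real.exp ‖x‖ := by rw [aux_real_exp_tsum]

lemma aux_exp_sub_one (x : 𝔸) : ‖NormedSpace.exp x - 1‖ ≤ ‖x‖ * Real.exp ‖x‖ := by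
  have hs : Summable (fun n : ℕ => ((n ! : ℂ))⁻¹ • x ^ n) := NormedSpace.expSeries_summable' x
  have key : NormedSpace.exp x - 1 = ∑' n : ℕ, (((n + 1)! : ℂ))⁻¹ • x ^ (n + 1) := by
    have h := Summable.sum_add_tsum_nat_add 1 hs
    simp only [NormedSpace.exp_eq_tsum ℂ]; rw [← h]
    simp [Finset.sum_range_one]
  rw [key]
  simpa using aux_tail_bound x 1

lemma aux_exp_sub_one_sub (x : 𝔸) :
    ‖NormedSpace.exp x - 1 - x‖ ≤ ‖x‖ ^ 2 * Real.exp ‖x‖ := by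
  have hs : Summable (fun n : ℕ => ((n ! : ℂ))⁻¹ • x ^ n) := NormedSpace.expSeries_summable' x
  have key : NormedSpace.exp x - 1 - x = ∑' n : ℕ, (((n + 2)! : ℂ))⁻¹ • x ^ (n + 2) := by
    have h := Summable.sum_add_tsum_nat_add 2 hs
    simp only [NormedSpace.exp_eq_tsum ℂ]; rw [← h]
    rw [Finset.sum_range_succ, Finset.sum_range_one]
    simp [Nat.factorial]
    abel
  rw [key]
  exact aux_tail_bound x 2

lemma aux_norm_list_prod_le (f : ℕ → 𝔸) (C : ℝ) (hC : ∀ n, ‖f n‖ ≤ C) (m : ℕ) :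
    ‖((List.range m).map f).prod‖ ≤ C ^ m := by
  have hC0 : 0 ≤ C := (norm_nonneg (f 0)).trans (hC 0)
  induction m with
  | zero => simp
  | succ m ih =>
      rw [List.range_succ, List.map_append, List.prod_append]
      simp only [List.map_cons, List.map_nil, List.prod_cons, List.prod_nil, mul_one]
      calc ‖((List.range m).map f).prod * f m‖
          ≤ ‖((List.range m).map f).prod‖ * ‖f m‖ := norm_mul_le _ _
      _ ≤ C ^ m * C := mul_le_mul ih (hC m) (norm_nonneg _) (pow_nonneg hC0 m)
      _ = C ^ (m + 1) := by rw [pow_succ]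

lemma aux_prod_sub_prod (f g : ℕ → 𝔸) (C D : ℝ) (hC1 : 1 ≤ C)
    (hf : ∀ n, ‖f n‖ ≤ C) (hg : ∀ n, ‖g n‖ ≤ C) (hD : ∀ n, ‖f n - g n‖ ≤ D) (m : ℕ) :
    ‖((List.range m).map f).prod - ((List.range m).map g).prod‖ ≤ m * D * C ^ m := by
  have hC0 : 0 ≤ C := zero_le_one.trans hC1
  have hD0 : 0 ≤ D := (norm_nonneg _).trans (hD 0)
  induction m with
  | zero => simp
  | succ m ih =>
      rw [List.range_succ, List.map_append, List.map_append, List.prod_append, List.prod_append]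
      simp only [List.map_cons, List.map_nil, List.prod_cons, List.prod_nil, mul_one]
      set Pf := ((List.range m).map f).prod
      set Pg := ((List.range m).map g).prod
      have hid : Pf * f m - Pg * g m = Pf * (f m - g m) + (Pf - Pg) * g m := by noncomm_ring
      have h1 : ‖Pf * (f m - g m)‖ ≤ C ^ m * D := by
        calc ‖Pf * (f m - g m)‖ ≤ ‖Pf‖ * ‖f m - g m‖ := norm_mul_le _ _
        _ ≤ C ^ m * D :=
            mul_le_mul (aux_norm_list_prod_le f C hf m) (hD m) (norm_nonneg _)
              (pow_nonneg hC0 m)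
      have h2 : ‖(Pf - Pg) * g m‖ ≤ (m * D * C ^ m) * C := by
        calc ‖(Pf - Pg) * g m‖ ≤ ‖Pf - Pg‖ * ‖g m‖ := norm_mul_le _ _
        _ ≤ (m * D * C ^ m) * C := by
            apply mul_le_mul ih (hg m) (norm_nonneg _)
            positivity
      calc ‖Pf * f m - Pg * g m‖ = ‖Pf * (f m - g m) + (Pf - Pg) * g m‖ := by rw [hid]
      _ ≤ ‖Pf * (f m - g m)‖ + ‖(Pf - Pg) * g m‖ := norm_add_le _ _
      _ ≤ C ^ m * D + (m * D * C ^ m) * C := add_le_add h1 h2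
      _ ≤ (↑(m + 1) : ℝ) * D * C ^ (m + 1) := by
          push_cast
          rw [pow_succ]
          nlinarith [mul_nonneg hD0 (pow_nonneg hC0 m)]

lemma aux_exp_shift (w v : 𝔸) (h : Commute w v) :
    ‖NormedSpace.exp (w + v) - NormedSpace.exp w‖
      ≤ Real.exp ‖w‖ * (‖v‖ * Real.exp ‖v‖) := by
  letI : NormedAlgebra ℚ 𝔸 := NormedAlgebra.restrictScalars ℚ ℂ 𝔸
  rw [NormedSpace.exp_add_of_commute h]
  have hid : NormedSpace.exp w * NormedSpace.exp v - NormedSpace.exp w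
      = NormedSpace.exp w * (NormedSpace.exp v - 1) := by noncomm_ring
  rw [hid]
  calc ‖NormedSpace.exp w * (NormedSpace.exp v - 1)‖
      ≤ ‖NormedSpace.exp w‖ * ‖NormedSpace.exp v - 1‖ := norm_mul_le _ _
  _ ≤ Real.exp ‖w‖ * (‖v‖ * Real.exp ‖v‖) :=
      mul_le_mul (aux_norm_exp_le w) (aux_exp_sub_one v) (norm_nonneg _)
        (Real.exp_pos _).le

end Helpers

attribute [local instance] Matrix.linftyOpNormedRing Matrix.linftyOpNormedAlgebra

set_option maxHeartbeats 2000000 in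
/-- Let `R ∈ M_N(ℂ)`, let `ω(ε) = o(ε)` as `ε → 0⁺`, and let `(R_{ε,n})` be
matrices with `sup_n ‖R_{ε,n}‖ ≤ ω(ε)`.  Then the products
`M_ε(t) = ∏_{n=0}^{⌊ε⁻¹t⌋−1} (Id − εR + R_{ε,n})` converge to `t ↦ e^{−tR}` uniformly on compact
subsets of `[0,∞)` as `ε → 0`. -/
theorem stmt3 (N : ℕ) (R : Matrix (Fin N) (Fin N) ℂ)
    (ω : ℝ → ℝ) (hω0 : ∀ ε, 0 < ε → 0 ≤ ω ε)
    (hω : Tendsto (fun ε => ω ε / ε) (nhdsWithin 0 (Set.Ioi 0)) (nhds 0))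
    (Rfam : ℝ → ℕ → Matrix (Fin N) (Fin N) ℂ)
    (hR : ∀ ε, 0 < ε → ∀ n : ℕ, ‖Rfam ε n‖ ≤ ω ε) :
    ∀ T : ℝ, 0 ≤ T → ∀ δ : ℝ, 0 < δ → ∃ ε₀ : ℝ, 0 < ε₀ ∧
      ∀ ε : ℝ, 0 < ε → ε < ε₀ → ∀ t ∈ Set.Icc (0 : ℝ) T,
        ‖(((List.range ⌊ε⁻¹ * t⌋₊).map
              (fun n => 1 - ε • R + Rfam ε n)).prod)
            - NormedSpace.exp (-(t • R))‖ < δ := by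
  intro T hT δ hδ
  rcases Nat.eq_zero_or_pos N with hN | hN
  · subst hN
    refine ⟨1, one_pos, ?_⟩
    intro ε hε hε' t ht
    haveI : Subsingleton (Matrix (Fin 0) (Fin 0) ℂ) :=
      ⟨fun a b => by ext i j; exact i.elim0⟩
    rw [Subsingleton.elim ((((List.range ⌊ε⁻¹ * t⌋₊).map
          (fun n => 1 - ε • R + Rfam ε n)).prod)) (NormedSpace.exp (-(t • R))),
      sub_self, norm_zero]
    exact hδ
  haveI : Nonempty (Fin N) := ⟨⟨0, hN⟩⟩
  set K := ‖R‖ with hKdef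
  have hK0 : 0 ≤ K := norm_nonneg R
  set c1 : ℝ := Real.exp (T * (K + 1)) * T with hc1
  set c2 : ℝ := K ^ 2 * Real.exp K with hc2
  set c3 : ℝ := Real.exp (T * K) * (K * Real.exp K) with hc3
  have hc10 : 0 ≤ c1 := by positivity
  have hc20 : 0 ≤ c2 := by positivity
  have hc30 : 0 ≤ c3 := by positivity
  have hεtend : Tendsto (fun ε : ℝ => ε) (nhdsWithin 0 (Set.Ioi 0)) (nhds (0 : ℝ)) :=
    tendsto_id.mono_left nhdsWithin_le_nhds
  have hbound : Tendsto (fun ε : ℝ => c1 * (ε * c2 + ω ε / ε) + c3 * ε)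
      (nhdsWithin 0 (Set.Ioi 0)) (nhds (c1 * ((0 : ℝ) * c2 + 0) + c3 * 0)) :=
    ((((hεtend.mul_const c2).add hω).const_mul c1)).add (hεtend.const_mul c3)
  have hbound0 : Tendsto (fun ε : ℝ => c1 * (ε * c2 + ω ε / ε) + c3 * ε)
      (nhdsWithin 0 (Set.Ioi 0)) (nhds 0) := by
    simpa using hbound
  have hev1 : ∀ᶠ ε in nhdsWithin 0 (Set.Ioi 0),
      c1 * (ε * c2 + ω ε / ε) + c3 * ε < δ := hbound0.eventually_lt_const hδ
  have hev2 : ∀ᶠ ε in nhdsWithin 0 (Set.Ioi 0), ω ε / ε < 1 :=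
    hω.eventually_lt_const one_pos
  have hev3 : ∀ᶠ ε : ℝ in nhdsWithin 0 (Set.Ioi 0), ε < 1 :=
    hεtend.eventually_lt_const one_pos
  have hev := (hev1.and hev2).and hev3
  rw [eventually_nhdsWithin_iff, Metric.eventually_nhds_iff] at hev
  obtain ⟨ε₀, hε₀, H⟩ := hev
  refine ⟨ε₀, hε₀, ?_⟩
  intro ε hε hεlt t ht
  obtain ⟨ht0, htT⟩ := ht
  have hdist : dist ε (0 : ℝ) < ε₀ := by
    rw [Real.dist_eq, sub_zero, abs_of_pos hε]; exact hεlt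
  obtain ⟨⟨hδb, hω1⟩, hε1⟩ := H hdist hε
  have hωnn : 0 ≤ ω ε := hω0 ε hε
  have hωdiv : 0 ≤ ω ε / ε := div_nonneg hωnn hε.le
  have hωε : ω ε ≤ ε := by
    rw [div_lt_one hε] at hω1; exact hω1.le
  set m := ⌊ε⁻¹ * t⌋₊ with hm
  have hfl : (m : ℝ) ≤ ε⁻¹ * t := Nat.floor_le (by positivity)
  have hmε : (m : ℝ) * ε ≤ t := by
    have := mul_le_mul_of_nonneg_right hfl hε.le
    calc (m : ℝ) * ε ≤ ε⁻¹ * t * ε := this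
    _ = t := by field_simp
  have hmε0 : 0 ≤ (m : ℝ) * ε := by positivity
  have htm : t - (m : ℝ) * ε ≤ ε := by
    have h2 : ε⁻¹ * t < (m : ℝ) + 1 := Nat.lt_floor_add_one _
    have h3 := mul_lt_mul_of_pos_right h2 hε
    have h4 : ε⁻¹ * t * ε = t := by field_simp
    rw [h4] at h3
    nlinarith
  set B := NormedSpace.exp (-(ε • R)) with hB
  set f : ℕ → Matrix (Fin N) (Fin N) ℂ := fun n => 1 - ε • R + Rfam ε n with hf
  set C := Real.exp (ε * (K + 1)) with hC
  set D := (ε * K) ^ 2 * Real.exp (ε * K) + ω ε with hD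
  have hD0 : 0 ≤ D := by positivity
  have hnegsmul : ‖-(ε • R)‖ = ε * K := by
    rw [norm_neg, norm_smul, Real.norm_eq_abs, abs_of_pos hε]
  have hC1 : 1 ≤ C := Real.one_le_exp (by positivity)
  have hfC : ∀ n, ‖f n‖ ≤ C := by
    intro n
    have h1 : ‖f n‖ ≤ ‖(1 : Matrix (Fin N) (Fin N) ℂ) - ε • R‖ + ‖Rfam ε n‖ := norm_add_le _ _
    have h2 : ‖(1 : Matrix (Fin N) (Fin N) ℂ) - ε • R‖ ≤ 1 + ε * K := by
      calc ‖(1 : Matrix (Fin N) (Fin N) ℂ) - ε • R‖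
          ≤ ‖(1 : Matrix (Fin N) (Fin N) ℂ)‖ + ‖ε • R‖ := norm_sub_le _ _
      _ = 1 + ε * K := by rw [norm_one, norm_smul, Real.norm_eq_abs, abs_of_pos hε]
    have h3 : ‖Rfam ε n‖ ≤ ε := (hR ε hε n).trans hωε
    have h4 := Real.add_one_le_exp (ε * (K + 1))
    calc ‖f n‖ ≤ (1 + ε * K) + ε := by linarith
    _ ≤ C := by rw [hC]; nlinarith
  have hgC : ‖B‖ ≤ C := by
    calc ‖B‖ ≤ Real.exp ‖-(ε • R)‖ := aux_norm_exp_le _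
    _ = Real.exp (ε * K) := by rw [hnegsmul]
    _ ≤ C := by
        rw [hC]; apply Real.exp_le_exp.mpr; nlinarith
  have hfg : ∀ n, ‖f n - B‖ ≤ D := by
    intro n
    have h1 : f n - B = -(B - 1 - (-(ε • R))) + Rfam ε n := by
      rw [hf]; noncomm_ring
    rw [h1]
    calc ‖-(B - 1 - (-(ε • R))) + Rfam ε n‖
        ≤ ‖-(B - 1 - (-(ε • R)))‖ + ‖Rfam ε n‖ := norm_add_le _ _
    _ = ‖B - 1 - (-(ε • R))‖ + ‖Rfam ε n‖ := by rw [norm_neg]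
    _ ≤ ‖-(ε • R)‖ ^ 2 * Real.exp ‖-(ε • R)‖ + ω ε :=
        add_le_add (aux_exp_sub_one_sub _) (hR ε hε n)
    _ = D := by rw [hnegsmul, hD]
  have hconstprod : ((List.range m).map (fun _ : ℕ => B)).prod = B ^ m := by
    rw [List.map_const', List.length_range, List.prod_replicate]
  have step1 : ‖((List.range m).map f).prod - B ^ m‖ ≤ m * D * C ^ m := by
    rw [← hconstprod]
    exact aux_prod_sub_prod f (fun _ => B) C D hC1 hfC (fun _ => hgC) hfg m
  have hBm : B ^ m = NormedSpace.exp (-(((m : ℝ) * ε) • R)) := by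
    letI : NormedAlgebra ℚ (Matrix (Fin N) (Fin N) ℂ) :=
      NormedAlgebra.restrictScalars ℚ ℂ (Matrix (Fin N) (Fin N) ℂ)
    rw [hB]; refine (NormedSpace.exp_nsmul m (-(ε • R))).symm.trans ?_
    congr 1
    rw [smul_neg, ← Nat.cast_smul_eq_nsmul ℝ, smul_smul]
  have hs0 : 0 ≤ (m : ℝ) * ε := hmε0
  have step2 : ‖B ^ m - NormedSpace.exp (-(t • R))‖
      ≤ Real.exp (t * K) * ((t - (m : ℝ) * ε) * K * Real.exp ((t - (m : ℝ) * ε) * K)) := by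
    have hwv : -(t • R) + (t - (m : ℝ) * ε) • R = -(((m : ℝ) * ε) • R) := by
      rw [show -(t • R) = (-t) • R from (neg_smul t R).symm, ← add_smul,
        show -t + (t - (m : ℝ) * ε) = -((m : ℝ) * ε) by ring, neg_smul]
    have hcomm : Commute (-(t • R)) ((t - (m : ℝ) * ε) • R) := by
      rw [show -(t • R) = (-t) • R from (neg_smul t R).symm]
      exact ((Commute.refl R).smul_left (-t)).smul_right (t - (m : ℝ) * ε)
    have hkey := aux_exp_shift (-(t • R)) ((t - (m : ℝ) * ε) • R) hcomm
    rw [hwv] at hkey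
    have hnw : ‖-(t • R)‖ = t * K := by
      rw [norm_neg, norm_smul, Real.norm_eq_abs, abs_of_nonneg ht0]
    have hnv : ‖(t - (m : ℝ) * ε) • R‖ = (t - (m : ℝ) * ε) * K := by
      rw [norm_smul, Real.norm_eq_abs, abs_of_nonneg (by linarith : (0:ℝ) ≤ t - (m : ℝ) * ε)]
    rw [hnw, hnv] at hkey
    rw [hBm]
    exact hkey
  have hCm : C ^ m ≤ Real.exp (T * (K + 1)) := by
    rw [hC, ← Real.exp_nat_mul]
    apply Real.exp_le_exp.mpr
    nlinarith
  have hmD : (m : ℝ) * D ≤ T * (ε * c2 + ω ε / ε) := by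
    have e1 : ε⁻¹ * t * D = t * (ε * (K ^ 2 * Real.exp (ε * K))) + t * (ω ε / ε) := by
      rw [hD]; field_simp
    have hexpe : Real.exp (ε * K) ≤ Real.exp K :=
      Real.exp_le_exp.mpr (by nlinarith)
    calc (m : ℝ) * D ≤ ε⁻¹ * t * D := mul_le_mul_of_nonneg_right hfl hD0
    _ = t * (ε * (K ^ 2 * Real.exp (ε * K))) + t * (ω ε / ε) := e1
    _ ≤ T * (ε * (K ^ 2 * Real.exp K)) + T * (ω ε / ε) := by
        apply add_le_add
        · apply mul_le_mul htT _ (by positivity) hT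
          apply mul_le_mul_of_nonneg_left _ hε.le
          exact mul_le_mul_of_nonneg_left hexpe (by positivity)
        · exact mul_le_mul_of_nonneg_right htT hωdiv
    _ = T * (ε * c2 + ω ε / ε) := by rw [hc2]; ring
  have hA : (m : ℝ) * D * C ^ m ≤ c1 * (ε * c2 + ω ε / ε) := by
    have hTx : 0 ≤ T * (ε * c2 + ω ε / ε) := by positivity
    calc (m : ℝ) * D * C ^ m ≤ T * (ε * c2 + ω ε / ε) * Real.exp (T * (K + 1)) :=
          mul_le_mul hmD hCm (by positivity) hTx
    _ = c1 * (ε * c2 + ω ε / ε) := by rw [hc1]; ring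
  have hBfinal : Real.exp (t * K) * ((t - (m : ℝ) * ε) * K * Real.exp ((t - (m : ℝ) * ε) * K)) ≤ c3 * ε := by
    have h1 : Real.exp (t * K) ≤ Real.exp (T * K) :=
      Real.exp_le_exp.mpr (mul_le_mul_of_nonneg_right htT hK0)
    have h2 : Real.exp ((t - (m : ℝ) * ε) * K) ≤ Real.exp K := by
      apply Real.exp_le_exp.mpr
      nlinarith [htm, hε1, hK0, hmε0]
    calc Real.exp (t * K) * ((t - (m : ℝ) * ε) * K * Real.exp ((t - (m : ℝ) * ε) * K))
        ≤ Real.exp (T * K) * (ε * K * Real.exp K) := by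
          apply mul_le_mul h1 _
            (mul_nonneg (mul_nonneg (by linarith) hK0) (Real.exp_pos _).le)
            (Real.exp_pos _).le
          apply mul_le_mul _ h2 (Real.exp_pos _).le (by positivity)
          exact mul_le_mul_of_nonneg_right htm hK0
    _ = c3 * ε := by rw [hc3]; ring
  calc ‖((List.range m).map f).prod - NormedSpace.exp (-(t • R))‖
      = ‖(((List.range m).map f).prod - B ^ m) + (B ^ m - NormedSpace.exp (-(t • R)))‖ := by
        congr 1; abel
  _ ≤ ‖((List.range m).map f).prod - B ^ m‖ + ‖B ^ m - NormedSpace.exp (-(t • R))‖ :=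
      norm_add_le _ _
  _ ≤ (m : ℝ) * D * C ^ m
        + Real.exp (t * K) * ((t - (m : ℝ) * ε) * K * Real.exp ((t - (m : ℝ) * ε) * K)) :=
      add_le_add step1 step2
  _ ≤ c1 * (ε * c2 + ω ε / ε) + c3 * ε := add_le_add hA hBfinal
  _ < δ := hδb
end

section
/- Let I = {1, …, n} and σ : I → ℝ strictly increasing. Define the tridiagonal symmetric matrix R by R_{i,i+1} = R_{i+1,i} = −1/(2(σ(i+1) − σ(i))) for 1 ≤ i < n, R_{ij} = 0 for |i − j| ≥ 2, and R_{ii} = Σ_{j≠i} |R_{ij}|. Define S : ℂ₀^I → ℂ₀^I (where ℂ₀^I is the zero-sum hyperplane) by ⟨f, S(g)⟩ = −Σ_{i,j} f_i g_j |σ(i) − σ(j)| followed by projection onto ℂ₀^I. Then R restricted to ℂ₀^I is the inverse of S; i.e. R₀ S = Id on ℂ₀^I. -/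
open scoped BigOperators

/-- The off-diagonal part of the tridiagonal matrix `R`:
`R_{i,i+1} = −1/(2(σ(i+1) − σ(i)))`, `R_{i,i−1} = −1/(2(σ(i) − σ(i−1)))`, and `0` when
`|i − j| ≥ 2`. -/
noncomputable def Roff (n : ℕ) (σ : Fin n → ℝ) : Matrix (Fin n) (Fin n) ℝ := fun i j =>
  if (j : ℕ) = (i : ℕ) + 1 then -(1 / (2 * (σ j - σ i)))
  else if (i : ℕ) = (j : ℕ) + 1 then -(1 / (2 * (σ i - σ j)))
  else 0

/-- The tridiagonal symmetric bi-L-matrix `R` with diagonal `R_{ii} = ∑_{j≠i} |R_{ij}|`. -/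
noncomputable def Rmat (n : ℕ) (σ : Fin n → ℝ) : Matrix (Fin n) (Fin n) ℝ := fun i j =>
  if i = j then ∑ k ∈ Finset.univ.erase i, |Roff n σ i k| else Roff n σ i j

lemma abs_roff {n : ℕ} {σ : Fin n → ℝ} (hσ : StrictMono σ) (i j : Fin n) :
    |Roff n σ i j| = -(Roff n σ i j) := by
  unfold Roff
  split_ifs with h1 h2
  · have hij : σ i < σ j := hσ (by rw [Fin.lt_def]; omega)
    rw [abs_of_nonpos]
    exact neg_nonpos.mpr (le_of_lt (one_div_pos.mpr (by linarith)))
  · have hij : σ j < σ i := hσ (by rw [Fin.lt_def]; omega)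
    rw [abs_of_nonpos]
    exact neg_nonpos.mpr (le_of_lt (one_div_pos.mpr (by linarith)))
  · simp

lemma roff_diag {n : ℕ} (σ : Fin n → ℝ) (i : Fin n) : Roff n σ i i = 0 := by
  unfold Roff; rw [if_neg (by omega), if_neg (by omega)]

lemma rowsum0 {n : ℕ} {σ : Fin n → ℝ} (hσ : StrictMono σ) (i : Fin n) :
    ∑ j, Rmat n σ i j = 0 := by
  rw [← Finset.add_sum_erase _ _ (Finset.mem_univ i)]
  have hdiag : Rmat n σ i i = ∑ j ∈ Finset.univ.erase i, -(Roff n σ i j) := by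
    unfold Rmat
    rw [if_pos rfl]
    exact Finset.sum_congr rfl fun j _ => abs_roff hσ i j
  have hoff : ∀ j ∈ Finset.univ.erase i, Rmat n σ i j = Roff n σ i j := by
    intro j hj
    unfold Rmat
    rw [if_neg (fun h => (Finset.mem_erase.mp hj).1 h.symm)]
  rw [hdiag, Finset.sum_congr rfl hoff, ← Finset.sum_add_distrib]
  apply Finset.sum_eq_zero
  intro j _; ring

lemma sum_ite_val {n : ℕ} (m : ℕ) (f : Fin n → ℝ) :
    ∑ j : Fin n, (if (j : ℕ) = m then f j else 0) =
      if h : m < n then f ⟨m, h⟩ else 0 := by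
  by_cases h : m < n
  · rw [dif_pos h, Finset.sum_eq_single ⟨m, h⟩]
    · simp
    · intro j _ hj
      rw [if_neg (fun hc => hj (Fin.ext hc))]
    · simp
  · rw [dif_neg h]
    apply Finset.sum_eq_zero
    intro j _
    have hj := j.isLt
    rw [if_neg (by omega)]

lemma nbr {n : ℕ} {σ : Fin n → ℝ} (hσ : StrictMono σ) {p q : Fin n}
    (hpq : (q : ℕ) = (p : ℕ) + 1) (k : Fin n) :
    -(1 / (2 * (σ q - σ p))) * (|σ q - σ k| - |σ p - σ k|) =
      if (k : ℕ) ≤ (p : ℕ) then -(1 : ℝ)/2 else 1/2 := by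
  have hpq' : σ p < σ q := hσ (by rw [Fin.lt_def]; omega)
  have hne : σ q - σ p ≠ 0 := ne_of_gt (by linarith)
  by_cases hk : (k : ℕ) ≤ (p : ℕ)
  · have h1 : σ k ≤ σ p := hσ.monotone (by rw [Fin.le_def]; omega)
    rw [if_pos hk, abs_of_nonneg (by linarith), abs_of_nonneg (by linarith),
      show σ q - σ k - (σ p - σ k) = σ q - σ p by ring]
    field_simp
  · have h1 : σ q ≤ σ k := hσ.monotone (by rw [Fin.le_def]; omega)
    rw [if_neg hk, abs_of_nonpos (by linarith), abs_of_nonpos (by linarith),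
      show -(σ q - σ k) - -(σ p - σ k) = -(σ q - σ p) by ring]
    field_simp

lemma key {n : ℕ} {σ : Fin n → ℝ} (hσ : StrictMono σ) (i k : Fin n) :
    ∑ j, Rmat n σ i j * |σ j - σ k| =
      ((if (i : ℕ) = 0 then (1 : ℝ)/2 else 0) + (if (i : ℕ) + 1 = n then (1 : ℝ)/2 else 0))
        - (if i = k then (1 : ℝ) else 0) := by
  have hi := i.isLt
  have hk := k.isLt
  have stepA : ∑ j, Rmat n σ i j * |σ j - σ k| =
      ∑ j, Roff n σ i j * (|σ j - σ k| - |σ i - σ k|) := by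
    rw [← Finset.add_sum_erase _ (fun j => Rmat n σ i j * |σ j - σ k|) (Finset.mem_univ i),
        ← Finset.add_sum_erase _ (fun j => Roff n σ i j * (|σ j - σ k| - |σ i - σ k|))
          (Finset.mem_univ i)]
    have hdiag : Rmat n σ i i = ∑ j ∈ Finset.univ.erase i, -(Roff n σ i j) := by
      unfold Rmat
      rw [if_pos rfl]
      exact Finset.sum_congr rfl fun j _ => abs_roff hσ i j
    rw [hdiag, roff_diag, Finset.sum_mul, zero_mul, zero_add, ← Finset.sum_add_distrib]
    apply Finset.sum_congr rfl
    intro j hj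
    have hRij : Rmat n σ i j = Roff n σ i j := by
      unfold Rmat
      rw [if_neg (fun h => (Finset.mem_erase.mp hj).1 h.symm)]
    rw [hRij]; ring
  rw [stepA]
  have hsplit : ∀ j : Fin n, Roff n σ i j * (|σ j - σ k| - |σ i - σ k|) =
      (if (j : ℕ) = (i : ℕ) + 1 then
        -(1 / (2 * (σ j - σ i))) * (|σ j - σ k| - |σ i - σ k|) else 0) +
      (if (i : ℕ) = (j : ℕ) + 1 then
        -(1 / (2 * (σ i - σ j))) * (|σ j - σ k| - |σ i - σ k|) else 0) := by
    intro j
    unfold Roff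
    split_ifs with h1 h2
    · omega
    · ring
    · ring
    · simp
  rw [Finset.sum_congr rfl (fun j _ => hsplit j), Finset.sum_add_distrib, sum_ite_val]
  -- second sum
  have hS2 : ∑ j : Fin n, (if (i : ℕ) = (j : ℕ) + 1 then
      -(1 / (2 * (σ i - σ j))) * (|σ j - σ k| - |σ i - σ k|) else 0) =
      if 0 < (i : ℕ) then (if (k : ℕ) ≤ (i : ℕ) - 1 then (1 : ℝ)/2 else -(1 : ℝ)/2) else 0 := by
    by_cases hi0 : 0 < (i : ℕ)
    · rw [if_pos hi0]
      have hcond : ∀ j : Fin n, ((i : ℕ) = (j : ℕ) + 1) ↔ ((j : ℕ) = (i : ℕ) - 1) := by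
        intro j; omega
      simp only [hcond]
      rw [sum_ite_val, dif_pos (show (i : ℕ) - 1 < n by omega)]
      set j0 : Fin n := ⟨(i : ℕ) - 1, by omega⟩ with hj0
      have hpq : (i : ℕ) = (j0 : ℕ) + 1 := by simp [hj0]; omega
      have h2 := nbr hσ hpq k
      rw [show -(1 / (2 * (σ i - σ j0))) * (|σ j0 - σ k| - |σ i - σ k|) =
        -(-(1 / (2 * (σ i - σ j0))) * (|σ i - σ k| - |σ j0 - σ k|)) by ring, h2]
      have : (j0 : ℕ) = (i : ℕ) - 1 := rfl
      rw [this]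
      split_ifs <;> norm_num
    · rw [if_neg hi0]
      apply Finset.sum_eq_zero
      intro j _
      rw [if_neg (by omega)]
  rw [hS2]
  by_cases h1 : (i : ℕ) + 1 < n
  · rw [dif_pos h1]
    have hpq : ((⟨(i : ℕ) + 1, h1⟩ : Fin n) : ℕ) = (i : ℕ) + 1 := rfl
    rw [nbr hσ hpq k]
    simp only [Fin.ext_iff]
    split_ifs <;> first | (exfalso; omega) | norm_num
  · rw [dif_neg h1]
    simp only [Fin.ext_iff]
    split_ifs <;> first | (exfalso; omega) | norm_num

/-- Let `σ : {1,…,n} → ℝ` be strictly increasing, `R` the tridiagonal symmetric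
bi-L-matrix above, and `S : ℂ₀ → ℂ₀` defined by `⟨f, S g⟩ = −∑_{i,j} f_i g_j |σ(i) − σ(j)|`
followed by projection onto the zero-sum hyperplane `ℂ₀`.  Then the restriction `R₀` of `R` to
`ℂ₀` is the inverse of `S`: `R₀ S = Id` on `ℂ₀`. -/
theorem stmt11 (n : ℕ) (hn : 0 < n) (σ : Fin n → ℝ) (hσ : StrictMono σ) :
    ∀ g : Fin n → ℂ, (∑ i, g i = 0) →
      ((Rmat n σ).map (Complex.ofReal : ℝ → ℂ)).mulVec
        (fun i => (-∑ j, (|σ i - σ j| : ℝ) * g j) -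
          (∑ k, -∑ j, ((|σ k - σ j| : ℝ) : ℂ) * g j) / (n : ℂ)) = g := by
  intro g hg
  funext i
  set c : ℂ := (∑ k, -∑ j, ((|σ k - σ j| : ℝ) : ℂ) * g j) / (n : ℂ) with hc
  have hmv : ((Rmat n σ).map (Complex.ofReal : ℝ → ℂ)).mulVec
      (fun i => (-∑ j, (|σ i - σ j| : ℝ) * g j) - c) i =
      ∑ j, ((Rmat n σ i j : ℝ) : ℂ) * ((-∑ l, ((|σ j - σ l| : ℝ) : ℂ) * g l) - c) := by
    simp [Matrix.mulVec, dotProduct, Matrix.map_apply]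
  rw [hmv]
  have hsub : ∑ j, ((Rmat n σ i j : ℝ) : ℂ) * ((-∑ l, ((|σ j - σ l| : ℝ) : ℂ) * g l) - c) =
      (∑ j, ((Rmat n σ i j : ℝ) : ℂ) * (-∑ l, ((|σ j - σ l| : ℝ) : ℂ) * g l))
        - (∑ j, ((Rmat n σ i j : ℝ) : ℂ)) * c := by
    rw [Finset.sum_mul, ← Finset.sum_sub_distrib]
    apply Finset.sum_congr rfl
    intro j _; ring
  rw [hsub]
  have hrow : (∑ j, ((Rmat n σ i j : ℝ) : ℂ)) = 0 := by
    rw [← Complex.ofReal_sum, rowsum0 hσ i, Complex.ofReal_zero]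
  rw [hrow, zero_mul, sub_zero]
  have hmain : ∑ j, ((Rmat n σ i j : ℝ) : ℂ) * (-∑ l, ((|σ j - σ l| : ℝ) : ℂ) * g l) =
      -∑ l, (((∑ j, Rmat n σ i j * |σ j - σ l|) : ℝ) : ℂ) * g l := by
    calc ∑ j, ((Rmat n σ i j : ℝ) : ℂ) * (-∑ l, ((|σ j - σ l| : ℝ) : ℂ) * g l)
        = ∑ j, ∑ l, -(((Rmat n σ i j * |σ j - σ l| : ℝ) : ℂ) * g l) := by
          apply Finset.sum_congr rfl
          intro j _
          rw [mul_neg, Finset.mul_sum, ← Finset.sum_neg_distrib]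
          apply Finset.sum_congr rfl
          intro l _
          push_cast
          ring
      _ = ∑ l, ∑ j, -(((Rmat n σ i j * |σ j - σ l| : ℝ) : ℂ) * g l) := Finset.sum_comm
      _ = -∑ l, (((∑ j, Rmat n σ i j * |σ j - σ l|) : ℝ) : ℂ) * g l := by
          rw [← Finset.sum_neg_distrib]
          apply Finset.sum_congr rfl
          intro l _
          rw [Complex.ofReal_sum, Finset.sum_mul, ← Finset.sum_neg_distrib]
  rw [hmain]
  have hterm : ∀ l : Fin n, (((∑ j, Rmat n σ i j * |σ j - σ l|) : ℝ) : ℂ) * g l =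
      (((if (i : ℕ) = 0 then (1 : ℝ)/2 else 0) +
        (if (i : ℕ) + 1 = n then (1 : ℝ)/2 else 0) : ℝ) : ℂ) * g l -
      (if i = l then g l else 0) := by
    intro l
    rw [key hσ i l]
    by_cases h : i = l
    · rw [if_pos h, if_pos h]; push_cast; ring
    · rw [if_neg h, if_neg h]; push_cast; ring
  rw [Finset.sum_congr rfl (fun l _ => hterm l), Finset.sum_sub_distrib, ← Finset.mul_sum, hg,
    mul_zero, Finset.sum_ite_eq, if_pos (Finset.mem_univ i)]
  ring
end
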